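/- arXiv:1004.4062 — 3 statements merged into one kernel-verified Lean document; each statement's English description precedes it below -/
import Mathlib

section
/- Let p be a probability distribution on a countable alphabet with 0 < p_1 < 1 (where p_1 is the probability of the smallest letter), and let P_n be the product measure on words of length n. Then the probability that a word of length n is NOT primitive is O(‖p‖_2^n); i.e. there exists a constant C such that for all n ≥ 2, P_n({w ∈ A^n : w is not primitive}) ≤ C · (∑_i p_i^2)^{n/2}. -/
open scoped ENNReal

/-- A word `w` of length `n` is a power of a word of length `k`. -/
def IsPowerOf (n k : ℕ) (hk : 0 < k) (w : Fin n → ℕ) : Prop :=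
  ∃ v : Fin k → ℕ, ∀ i : Fin n, w i = v ⟨(i : ℕ) % k, Nat.mod_lt _ hk⟩

/-- A word of length `n` is primitive if it is not a proper power. -/
def Primitive (n : ℕ) (hn : 0 < n) (w : Fin n → ℕ) : Prop :=
  ∀ k, ∀ hkd : k ∣ n, k < n → ¬ IsPowerOf n k (Nat.pos_of_dvd_of_pos hkd hn) w

lemma tsum_pi_fin : ∀ (k : ℕ) (g : Fin k → ℕ → ℝ≥0∞),
    ∑' v : Fin k → ℕ, ∏ j, g j (v j) = ∏ j, ∑' i, g j i := by
  intro k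
  induction k with
  | zero =>
    intro g
    rw [Finset.univ_eq_empty, Finset.prod_empty,
      tsum_eq_single (fun i : Fin 0 => (0 : ℕ)) ?_]
    · simp
    · intro b hb
      exact absurd (Subsingleton.elim b _) hb
  | succ k ih =>
    intro g
    rw [← (Fin.consEquiv (fun _ : Fin (k+1) => ℕ)).tsum_eq]
    have : ∀ x : ℕ × (Fin k → ℕ),
        (∏ j, g j ((Fin.consEquiv (fun _ : Fin (k+1) => ℕ)) x j)) =
        g 0 x.1 * ∏ j : Fin k, g j.succ (x.2 j) := by
      intro x
      rw [Fin.prod_univ_succ]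
      simp [Fin.consEquiv]
    rw [tsum_congr this, ENNReal.tsum_prod']
    simp only [ENNReal.tsum_mul_left, ENNReal.tsum_mul_right]
    rw [ih (fun j => g j.succ), Fin.prod_univ_succ]

/-- Extension of a word of length `k` to a word of length `n` by periodicity. -/
def wordExt (n k : ℕ) (v : Fin k → ℕ) : Fin n → ℕ :=
  fun i => if h : (i : ℕ) % k < k then v ⟨(i : ℕ) % k, h⟩ else 0

set_option maxHeartbeats 1000000 in
lemma pow_words_bound (p : ℕ → ℝ) (hnn : ∀ i, 0 ≤ p i)
    (hsq : Summable fun i => p i ^ 2) (s : ℝ) (hs0 : 0 ≤ s) (hsle : ∀ i, p i ≤ s)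
    (hple1 : ∀ i, p i ≤ 1)
    (n k : ℕ) (hk : 0 < k) (h2k : 2 * k ≤ n) :
    ∑' v : Fin k → ℕ, ∏ i : Fin n, ENNReal.ofReal (p (wordExt n k v i)) ≤
      ENNReal.ofReal ((∑' i, p i ^ 2) ^ k * s ^ (n - 2 * k)) := by
  classical
  set Q := ∑' i, p i ^ 2 with hQdef
  have hQ0 : 0 ≤ Q := tsum_nonneg fun i => sq_nonneg _
  set q : Fin n → Fin k := fun i => ⟨(i : ℕ) % k, Nat.mod_lt _ hk⟩ with hq
  set c : Fin k → ℕ := fun j => ({i : Fin n | q i = j} : Finset (Fin n)).card with hc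
  -- c j ≥ 2
  have hc2 : ∀ j, 2 ≤ c j := by
    intro j
    have hj1 : (j : ℕ) < n := lt_of_lt_of_le j.isLt (by omega)
    have hj2 : (j : ℕ) + k < n := by have := j.isLt; omega
    have hne : (⟨(j : ℕ), hj1⟩ : Fin n) ≠ ⟨(j : ℕ) + k, hj2⟩ := by
      intro h
      have := congrArg Fin.val h
      simp at this; omega
    have hsub : ({⟨(j : ℕ), hj1⟩, ⟨(j : ℕ) + k, hj2⟩} : Finset (Fin n)) ⊆
        ({i : Fin n | q i = j} : Finset (Fin n)) := by
      intro x hx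
      simp only [Finset.mem_insert, Finset.mem_singleton] at hx
      rcases hx with rfl | rfl <;>
        · simp only [Finset.mem_filter, Finset.mem_univ, true_and]
          apply Fin.ext
          simp [hq, Nat.mod_eq_of_lt j.isLt, Nat.add_mod_right]
    calc 2 = ({⟨(j : ℕ), hj1⟩, ⟨(j : ℕ) + k, hj2⟩} : Finset (Fin n)).card := by
            rw [Finset.card_pair hne]
      _ ≤ c j := Finset.card_le_card hsub
  -- ∑ c j = n
  have hcsum : ∑ j, c j = n := by
    have := Finset.card_eq_sum_card_fiberwise (fun x (_ : x ∈ Finset.univ) =>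
      Finset.mem_univ (q x))
    simpa using this.symm
  -- summability of moments
  -- summability of moments
  have hsummc : ∀ cc : ℕ, 2 ≤ cc → Summable fun i => p i ^ cc := by
    intro cc hcc
    apply hsq.of_nonneg_of_le (fun i => pow_nonneg (hnn i) cc)
    intro i
    calc p i ^ cc = p i ^ 2 * p i ^ (cc - 2) := by rw [← pow_add]; congr 1; omega
      _ ≤ p i ^ 2 * 1 := by
          apply mul_le_mul_of_nonneg_left _ (sq_nonneg _)
          exact pow_le_one₀ (hnn i) (hple1 i)
      _ = p i ^ 2 := mul_one _
  have hmoment : ∀ cc : ℕ, 2 ≤ cc → ∑' i, p i ^ cc ≤ Q * s ^ (cc - 2) := by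
    intro cc hcc
    have hpt : ∀ i, p i ^ cc ≤ p i ^ 2 * s ^ (cc - 2) := by
      intro i
      calc p i ^ cc = p i ^ 2 * p i ^ (cc - 2) := by rw [← pow_add]; congr 1; omega
        _ ≤ p i ^ 2 * s ^ (cc - 2) :=
            mul_le_mul_of_nonneg_left (pow_le_pow_left₀ (hnn i) (hsle i) _) (sq_nonneg _)
    calc ∑' i, p i ^ cc ≤ ∑' i, p i ^ 2 * s ^ (cc - 2) :=
          Summable.tsum_le_tsum hpt (hsummc cc hcc) (hsq.mul_right _)
      _ = Q * s ^ (cc - 2) := by rw [tsum_mul_right]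
  have hsubsum : ∑ j, (c j - 2) = n - 2 * k := by
    have h1 : ∑ j, (c j - 2) + 2 * k = ∑ j, c j := by
      have h2 : (2 * k : ℕ) = ∑ _j : Fin k, 2 := by
        simp [Finset.sum_const, Finset.card_univ, mul_comm]
      rw [h2, ← Finset.sum_add_distrib]
      exact Finset.sum_congr rfl fun j _ => by have := hc2 j; omega
    omega
  calc ∑' v : Fin k → ℕ, ∏ i : Fin n, ENNReal.ofReal (p (wordExt n k v i))
      = ∑' v : Fin k → ℕ, ∏ j : Fin k, ENNReal.ofReal (p (v j) ^ c j) := by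
        refine tsum_congr fun v => ?_
        have h1 : ∀ i : Fin n, wordExt n k v i = v (q i) := fun i => dif_pos _
        calc ∏ i : Fin n, ENNReal.ofReal (p (wordExt n k v i))
            = ∏ i : Fin n, (fun j => ENNReal.ofReal (p (v j))) (q i) :=
              Finset.prod_congr rfl fun i _ => by rw [h1 i]
          _ = ∏ j : Fin k, ENNReal.ofReal (p (v j)) ^ c j := by
              rw [← Finset.prod_fiberwise' Finset.univ q (fun j => ENNReal.ofReal (p (v j)))]
              exact Finset.prod_congr rfl fun j _ => Finset.prod_const _
          _ = ∏ j, ENNReal.ofReal (p (v j) ^ c j) :=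
              Finset.prod_congr rfl fun j _ => (ENNReal.ofReal_pow (hnn _) _).symm
    _ = ∏ j : Fin k, ∑' i : ℕ, ENNReal.ofReal (p i ^ c j) := tsum_pi_fin k (fun j i => ENNReal.ofReal (p i ^ c j))
    _ = ∏ j : Fin k, ENNReal.ofReal (∑' i, p i ^ c j) :=
        Finset.prod_congr rfl fun j _ =>
          (ENNReal.ofReal_tsum_of_nonneg (fun i => pow_nonneg (hnn i) _)
            (hsummc _ (hc2 j))).symm
    _ ≤ ∏ j : Fin k, ENNReal.ofReal (Q * s ^ (c j - 2)) :=
        Finset.prod_le_prod' fun j _ => ENNReal.ofReal_le_ofReal (hmoment _ (hc2 j))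
    _ = ENNReal.ofReal (∏ j : Fin k, Q * s ^ (c j - 2)) :=
        (ENNReal.ofReal_prod_of_nonneg fun j _ => by positivity).symm
    _ = ENNReal.ofReal (Q ^ k * s ^ (n - 2 * k)) := by
        congr 1
        rw [Finset.prod_mul_distrib, Finset.prod_const, Finset.prod_pow_eq_pow_sum,
          hsubsum, Finset.card_univ, Fintype.card_fin]

/-- if `0 < p 0 < 1`, the probability that a word of length `n` is
not primitive is `O(‖p‖₂ⁿ)`: there is `C` with
`P_n(not primitive) ≤ C (∑ i, p i ^ 2)^{n/2}` for all `n ≥ 2`. -/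
theorem prob_not_primitive_le (p : ℕ → ℝ) (hnn : ∀ i, 0 ≤ p i) (hsum : Summable p)
    (htot : ∑' i, p i = 1) (hp0 : 0 < p 0) (hp1 : p 0 < 1) :
    ∃ C : ℝ, ∀ n : ℕ, ∀ hn : 2 ≤ n,
      (∑' w : {w : Fin n → ℕ // ¬ Primitive n (by omega) w}, ∏ i, p (w.1 i)) ≤
        C * (∑' i, p i ^ 2) ^ ((n : ℝ) / 2) := by
  classical
  have hple1 : ∀ i, p i ≤ 1 := by
    intro i
    rw [← htot]
    exact Summable.le_tsum hsum i fun j _ => hnn j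
  have hsq : Summable fun i => p i ^ 2 := by
    apply hsum.of_nonneg_of_le (fun i => sq_nonneg _)
    intro i
    nlinarith [hnn i, hple1 i]
  set Q := ∑' i, p i ^ 2 with hQdef
  have hQ0 : 0 ≤ Q := tsum_nonneg fun i => sq_nonneg _
  have hQpos : 0 < Q :=
    lt_of_lt_of_le (by positivity) (Summable.le_tsum hsq 0 fun j _ => sq_nonneg _)
  obtain ⟨i2, hi2ne, hi2pos⟩ : ∃ i, i ≠ 0 ∧ 0 < p i := by
    by_contra h
    push_neg at h
    have hz : ∀ b : ℕ, b ≠ 0 → p b = 0 := fun b hb => le_antisymm (h b hb) (hnn b)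
    have h1 : ∑' i, p i = p 0 := tsum_eq_single 0 hz
    rw [htot] at h1
    linarith
  set δ := min (p 0) (p i2) with hδ
  have hδpos : 0 < δ := lt_min hp0 hi2pos
  have hpair : ∀ (a b : ℕ), a ≠ b → p a ^ 2 + p b ^ 2 ≤ Q := by
    intro a b hab
    have h1 := Summable.sum_le_tsum ({a, b} : Finset ℕ) (fun i _ => sq_nonneg (p i)) hsq
    rwa [Finset.sum_insert (by simp [hab]), Finset.sum_singleton] at h1
  have hkey : ∀ i, p i ^ 2 ≤ Q - δ ^ 2 := by
    intro i
    rcases eq_or_ne i 0 with rfl | hi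
    · have h1 := hpair 0 i2 (Ne.symm hi2ne)
      have h2 : δ ^ 2 ≤ p i2 ^ 2 := pow_le_pow_left₀ hδpos.le (min_le_right _ _) 2
      linarith
    · have h1 := hpair i 0 hi
      have h2 : δ ^ 2 ≤ p 0 ^ 2 := pow_le_pow_left₀ hδpos.le (min_le_left _ _) 2
      linarith
  have hQδ : 0 ≤ Q - δ ^ 2 := le_trans (sq_nonneg (p 0)) (hkey 0)
  set s := Real.sqrt (Q - δ ^ 2) with hs
  have hs0 : 0 ≤ s := Real.sqrt_nonneg _
  have hsle : ∀ i, p i ≤ s := by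
    intro i
    rw [hs, ← Real.sqrt_sq (hnn i)]
    exact Real.sqrt_le_sqrt (hkey i)
  set v := Real.sqrt ((Q - δ ^ 2) / Q) with hv
  have hv0 : 0 ≤ v := Real.sqrt_nonneg _
  have hv1 : v < 1 := by
    rw [hv, ← Real.sqrt_one]
    apply Real.sqrt_lt_sqrt (by positivity)
    rw [div_lt_one hQpos]
    nlinarith
  have hsv : s = Real.sqrt Q * v := by
    rw [hs, hv, ← Real.sqrt_mul hQ0]
    congr 1
    field_simp
  refine ⟨(1 - v)⁻¹, ?_⟩
  intro n hn
  have hn0 : 0 < n := by omega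
  set D := n.properDivisors with hD
  have hDfacts : ∀ k ∈ D, 0 < k ∧ 2 * k ≤ n := by
    intro k hk
    rw [hD, Nat.mem_properDivisors] at hk
    obtain ⟨⟨m, rfl⟩, hlt⟩ := hk
    have hkpos : 0 < k := by
      rcases Nat.eq_zero_or_pos k with rfl | h
      · simp at hlt
      · exact h
    have hm2 : 2 ≤ m := by
      by_contra h
      push_neg at h
      interval_cases m <;> omega
    exact ⟨hkpos, by calc 2 * k = k * 2 := by ring
      _ ≤ k * m := Nat.mul_le_mul_left k hm2⟩
  -- the key ENNReal estimate
  have hENN : (∑' w : {w : Fin n → ℕ // ¬ Primitive n (by omega) w},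
        ∏ i, ENNReal.ofReal (p (w.1 i))) ≤
      ENNReal.ofReal (∑ k ∈ D, Q ^ k * s ^ (n - 2 * k)) := by
    have hcover : {w : Fin n → ℕ | ¬ Primitive n hn0 w} ⊆
        ⋃ k ∈ D, Set.range (wordExt n k) := by
      intro w hw
      simp only [Set.mem_setOf_eq, Primitive] at hw
      push_neg at hw
      obtain ⟨k, hkd, hklt, vv, hvv⟩ := hw
      have hkpos : 0 < k := Nat.pos_of_dvd_of_pos hkd hn0
      refine Set.mem_iUnion₂.mpr ⟨k, Nat.mem_properDivisors.mpr ⟨hkd, hklt⟩, ⟨vv, ?_⟩⟩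
      funext i
      rw [wordExt, dif_pos (Nat.mod_lt _ hkpos)]
      exact (hvv i).symm
    have h1 : (∑' w : {w : Fin n → ℕ // ¬ Primitive n (by omega) w},
          ∏ i, ENNReal.ofReal (p (w.1 i))) ≤
        ∑ k ∈ D, ∑' x : Set.range (wordExt n k), ∏ i, ENNReal.ofReal (p (x.1 i)) := by
      refine le_trans (le_trans (le_of_eq rfl)
        (ENNReal.tsum_mono_subtype (fun w => ∏ i, ENNReal.ofReal (p (w i))) hcover)) ?_
      exact ENNReal.tsum_biUnion_le (fun w : Fin n → ℕ => ∏ i, ENNReal.ofReal (p (w i))) D (fun k => Set.range (wordExt n k))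
    refine h1.trans ?_
    refine le_trans (Finset.sum_le_sum (fun k hk => ?_))
      (le_of_eq (ENNReal.ofReal_sum_of_nonneg fun k _ => by positivity).symm)
    obtain ⟨hkpos, h2k⟩ := hDfacts k hk
    refine le_trans ?_ (pow_words_bound p hnn hsq s hs0 hsle hple1 n k hkpos h2k)
    exact ENNReal.tsum_le_tsum_comp_of_surjective Set.rangeFactorization_surjective
      (fun x : Set.range (wordExt n k) => ∏ i, ENNReal.ofReal (p (x.1 i)))
  -- the real geometric estimate
  have h4 : ∑ k ∈ D, Q ^ k * s ^ (n - 2 * k) ≤ (1 - v)⁻¹ * Q ^ ((n : ℝ) / 2) := by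
    have hterm : ∀ k ∈ D, Q ^ k * s ^ (n - 2 * k) =
        Real.sqrt Q ^ n * v ^ (n - 2 * k) := by
      intro k hk
      obtain ⟨hkpos, h2k⟩ := hDfacts k hk
      have e1 : Q ^ k = Real.sqrt Q ^ (2 * k) := by
        rw [pow_mul, Real.sq_sqrt hQ0]
      have e2 : 2 * k + (n - 2 * k) = n := by omega
      calc Q ^ k * s ^ (n - 2 * k)
          = Real.sqrt Q ^ (2 * k) * (Real.sqrt Q ^ (n - 2 * k) * v ^ (n - 2 * k)) := by
            rw [e1, hsv, mul_pow]
        _ = Real.sqrt Q ^ (2 * k) * Real.sqrt Q ^ (n - 2 * k) * v ^ (n - 2 * k) := by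
            ring
        _ = Real.sqrt Q ^ n * v ^ (n - 2 * k) := by rw [← pow_add, e2]
    rw [Finset.sum_congr rfl hterm, ← Finset.mul_sum]
    have hgeo : ∑ k ∈ D, v ^ (n - 2 * k) ≤ (1 - v)⁻¹ := by
      calc ∑ k ∈ D, v ^ (n - 2 * k)
          = ∑ m ∈ D.image (fun k => n - 2 * k), v ^ m := by
            refine (Finset.sum_image ?_).symm
            intro a ha b hb hab
            have h2a := (hDfacts a ha).2
            have h2b := (hDfacts b hb).2
            simp only at hab
            omega
        _ ≤ ∑ m ∈ Finset.range (n + 1), v ^ m := by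
            refine Finset.sum_le_sum_of_subset_of_nonneg ?_
              (fun m _ _ => pow_nonneg hv0 m)
            intro m hm
            simp only [Finset.mem_image] at hm
            obtain ⟨k, hk, rfl⟩ := hm
            simp only [Finset.mem_range]
            omega
        _ ≤ ∑' m : ℕ, v ^ m := Summable.sum_le_tsum _ (fun m _ => pow_nonneg hv0 m)
            (summable_geometric_of_lt_one hv0 hv1)
        _ = (1 - v)⁻¹ := tsum_geometric_of_lt_one hv0 hv1
    calc Real.sqrt Q ^ n * ∑ k ∈ D, v ^ (n - 2 * k)
        ≤ Real.sqrt Q ^ n * (1 - v)⁻¹ :=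
          mul_le_mul_of_nonneg_left hgeo (by positivity)
      _ = (1 - v)⁻¹ * Q ^ ((n : ℝ) / 2) := by
          rw [mul_comm]
          congr 1
          rw [← Real.rpow_natCast (Real.sqrt Q) n, Real.sqrt_eq_rpow,
            ← Real.rpow_mul hQ0]
          congr 1
          ring
  -- put it together
  have hnonneg : (0 : ℝ) ≤ (1 - v)⁻¹ * Q ^ ((n : ℝ) / 2) :=
    mul_nonneg (inv_nonneg.mpr (by linarith)) (Real.rpow_nonneg hQ0 _)
  have hLHS : (∑' w : {w : Fin n → ℕ // ¬ Primitive n (by omega) w}, ∏ i, p (w.1 i)) =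
      (∑' w : {w : Fin n → ℕ // ¬ Primitive n (by omega) w},
        ∏ i, ENNReal.ofReal (p (w.1 i))).toReal := by
    rw [ENNReal.tsum_toReal_eq (fun w => by
      rw [← ENNReal.ofReal_prod_of_nonneg (fun i _ => hnn _)]
      exact ENNReal.ofReal_ne_top)]
    refine tsum_congr fun w => ?_
    rw [← ENNReal.ofReal_prod_of_nonneg (fun i _ => hnn _),
      ENNReal.toReal_ofReal (Finset.prod_nonneg fun i _ => hnn _)]
  rw [hLHS]
  exact ENNReal.toReal_le_of_le_ofReal hnonneg
    (hENN.trans (ENNReal.ofReal_le_ofReal h4))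
end

section
/- Let Ω be a probability space, X : Ω → R a bounded random variable, and A ⊆ Ω a measurable event with P(A) > 0. Let ν be the law of X and ν̃ the conditional law of X given A. Then the L²-Wasserstein distance satisfies W_2(ν, ν̃) ≤ 2 · P(Ωc∖A)^{1/2} · ‖X‖_∞, i.e. W_2(ν, ν̃) ≤ 2·sqrt(P(Aᶜ))·‖X‖_∞. -/
open MeasureTheory ProbabilityTheory

/-- The `L²`-Wasserstein distance between two measures on `ℝ`. -/
noncomputable def W2R (μ ν : Measure ℝ) : ℝ :=
  sInf {r : ℝ | ∃ γ : Measure (ℝ × ℝ),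
    γ.map Prod.fst = μ ∧ γ.map Prod.snd = ν ∧
    r = (∫ z, (z.1 - z.2) ^ 2 ∂γ) ^ ((1 : ℝ) / 2)}

/-- for a bounded random variable `X` (with `|X| ≤ C` a.s., `C` an
essential bound playing the role of `‖X‖_∞`) and an event `A` of positive
probability, the law `ν` of `X` and the conditional law `ν̃` of `X` given `A`
satisfy `W₂(ν, ν̃) ≤ 2 √(P(Aᶜ)) · ‖X‖_∞`. -/
theorem wasserstein_conditional_law (Ω : Type*) [MeasurableSpace Ω]
    (P : Measure Ω) [IsProbabilityMeasure P] (X : Ω → ℝ) (hX : Measurable X)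
    (C : ℝ) (hC : ∀ᵐ ω ∂P, |X ω| ≤ C)
    (A : Set Ω) (hA : MeasurableSet A) (hApos : 0 < P A) :
    W2R (P.map X) ((P[|A]).map X) ≤ 2 * Real.sqrt (P Aᶜ).toReal * C := by
  rw [W2R]
  have hC0 : 0 ≤ C := by
    obtain ⟨ω, hω⟩ := hC.exists
    exact le_trans (abs_nonneg _) hω
  haveI : IsProbabilityMeasure (P[|A]) := cond_isProbabilityMeasure hApos.ne'
  set nt : Measure ℝ := (P[|A]).map X with hnt
  haveI : IsProbabilityMeasure nt := Measure.isProbabilityMeasure_map hX.aemeasurable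
  set μ₂ : Measure ℝ := (P.restrict Aᶜ).map X with hμ₂
  haveI : IsFiniteMeasure μ₂ := by rw [hμ₂]; infer_instance
  set γ₁ : Measure (ℝ × ℝ) := (P.restrict A).map (fun ω => (X ω, X ω)) with hγ₁
  set γ₂ : Measure (ℝ × ℝ) := μ₂.prod nt with hγ₂
  set γ : Measure (ℝ × ℝ) := γ₁ + γ₂ with hγ
  have hpair : Measurable fun ω => (X ω, X ω) := hX.prodMk hX
  -- restrict A map X = P A • nt
  have hres : (P.restrict A).map X = P A • nt := by
    rw [hnt, ProbabilityTheory.cond, Measure.map_smul, smul_smul,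
      ENNReal.mul_inv_cancel hApos.ne' (measure_ne_top P A), one_smul]
  -- marginals
  have hfst : γ.map Prod.fst = P.map X := by
    rw [hγ, Measure.map_add _ _ measurable_fst, hγ₁,
      Measure.map_map measurable_fst hpair, hγ₂, Measure.map_fst_prod,
      measure_univ, one_smul]
    show (P.restrict A).map X + (P.restrict Aᶜ).map X = P.map X
    rw [← Measure.map_add _ _ hX, Measure.restrict_add_restrict_compl hA]
  have hsnd : γ.map Prod.snd = nt := by
    rw [hγ, Measure.map_add _ _ measurable_snd, hγ₁,
      Measure.map_map measurable_snd hpair, hγ₂, Measure.map_snd_prod]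
    show (P.restrict A).map X + μ₂ Set.univ • nt = nt
    have : μ₂ Set.univ = P Aᶜ := by
      rw [hμ₂, Measure.map_apply hX MeasurableSet.univ, Set.preimage_univ,
        Measure.restrict_apply_univ]
    rw [hres, this, ← add_smul, measure_add_measure_compl hA, measure_univ, one_smul]
  -- a.e. bounds
  have hmeas : MeasurableSet {x : ℝ | |x| ≤ C} :=
    measurableSet_le (measurable_id.abs) measurable_const
  have hμ₂ae : ∀ᵐ x ∂μ₂, |x| ≤ C := by
    rw [hμ₂, ae_map_iff hX.aemeasurable hmeas]
    exact ae_restrict_of_ae (hC.mono fun ω h => h)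
  have hntae : ∀ᵐ x ∂nt, |x| ≤ C := by
    rw [hnt, ae_map_iff hX.aemeasurable hmeas]
    exact cond_absolutelyContinuous.ae_le hC
  have hγ₂ae : ∀ᵐ z ∂γ₂, (z.1 - z.2) ^ 2 ≤ (2 * C) ^ 2 := by
    have h1 : ∀ᵐ z ∂γ₂, |z.1| ≤ C := by
      rw [hγ₂, Measure.ae_prod_iff_ae_ae (by exact measurableSet_le measurable_fst.abs measurable_const : MeasurableSet {z : ℝ × ℝ | |z.1| ≤ C})]
      filter_upwards [hμ₂ae] with x hx
      exact ae_of_all _ fun _ => hx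
    have h2 : ∀ᵐ z ∂γ₂, |z.2| ≤ C := by
      rw [hγ₂, Measure.ae_prod_iff_ae_ae (by exact measurableSet_le measurable_snd.abs measurable_const : MeasurableSet {z : ℝ × ℝ | |z.2| ≤ C})]
      exact ae_of_all _ fun x => hntae
    filter_upwards [h1, h2] with z hz1 hz2
    have habs : |z.1 - z.2| ≤ 2 * C := by
      calc |z.1 - z.2| ≤ |z.1| + |z.2| := abs_sub _ _
        _ ≤ C + C := add_le_add hz1 hz2
        _ = 2 * C := by ring
    calc (z.1 - z.2) ^ 2 = |z.1 - z.2| ^ 2 := (sq_abs _).symm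
      _ ≤ (2 * C) ^ 2 := by
          apply pow_le_pow_left₀ (abs_nonneg _) habs
  have hfmeas : Measurable fun z : ℝ × ℝ => (z.1 - z.2) ^ 2 :=
    ((measurable_fst.sub measurable_snd).pow_const 2)
  have hint₂ : Integrable (fun z : ℝ × ℝ => (z.1 - z.2) ^ 2) γ₂ := by
    refine Integrable.mono' (integrable_const ((2*C)^2)) hfmeas.aestronglyMeasurable ?_
    filter_upwards [hγ₂ae] with z hz
    rwa [Real.norm_eq_abs, abs_of_nonneg (sq_nonneg _)]
  have hI1 : (∫ z, (z.1 - z.2) ^ 2 ∂γ₁) = 0 := by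
    rw [hγ₁, integral_map hpair.aemeasurable hfmeas.aestronglyMeasurable]
    simp
  have hI2 : (∫ z, (z.1 - z.2) ^ 2 ∂γ₂) ≤ (2*C)^2 * (P Aᶜ).toReal := by
    have := integral_mono_ae hint₂ (integrable_const ((2*C)^2)) hγ₂ae
    have hu : (γ₂ Set.univ).toReal = (P Aᶜ).toReal := by
      rw [hγ₂, ← Set.univ_prod_univ, Measure.prod_prod, measure_univ (μ := nt), mul_one,
        hμ₂, Measure.map_apply hX MeasurableSet.univ, Set.preimage_univ,
        Measure.restrict_apply_univ]
    rw [integral_const, measureReal_def, hu, smul_eq_mul, mul_comm] at this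
    exact this
  have hint₁ : Integrable (fun z : ℝ × ℝ => (z.1 - z.2) ^ 2) γ₁ := by
    rw [hγ₁, integrable_map_measure hfmeas.aestronglyMeasurable hpair.aemeasurable]
    refine (integrable_const (0:ℝ)).congr ?_
    filter_upwards with ω
    simp
  have hItot : (∫ z, (z.1 - z.2) ^ 2 ∂γ) ≤ (2*C)^2 * (P Aᶜ).toReal := by
    rw [hγ, integral_add_measure hint₁ hint₂, hI1, zero_add]
    exact hI2
  -- conclude
  have hbdd : BddBelow {r : ℝ | ∃ γ : Measure (ℝ × ℝ),
      γ.map Prod.fst = P.map X ∧ γ.map Prod.snd = nt ∧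
      r = (∫ z, (z.1 - z.2) ^ 2 ∂γ) ^ ((1 : ℝ) / 2)} := by
    refine ⟨0, fun r hr => ?_⟩
    obtain ⟨γ', _, _, rfl⟩ := hr
    exact Real.rpow_nonneg (integral_nonneg fun z => sq_nonneg _) _
  have hle := csInf_le hbdd ⟨γ, hfst, hsnd, rfl⟩
  refine le_trans hle ?_
  rw [← Real.sqrt_eq_rpow]
  have : (2 * Real.sqrt (P Aᶜ).toReal * C) = Real.sqrt ((2*C)^2 * (P Aᶜ).toReal) := by
    rw [Real.sqrt_mul (sq_nonneg _), Real.sqrt_sq (by linarith : 0 ≤ 2*C)]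
    ring
  rw [this]
  exact Real.sqrt_le_sqrt hItot
end

section
/- Every nonempty word w over a totally ordered alphabet has a unique factorization as a nonincreasing product of Lyndon words: w = w_ℓ w_{ℓ−1} ⋯ w_2 w_1 with each w_i a Lyndon word and w_ℓ ≥ w_{ℓ−1} ≥ ⋯ ≥ w_1 in lexicographic order. -/
/-- A Lyndon word: a nonempty word strictly smaller (lexicographically) than all
of its proper nonempty suffixes. -/
def IsLyndon {α : Type*} [LinearOrder α] (l : List α) : Prop :=
  l ≠ [] ∧ ∀ s : List α, s <:+ l → s ≠ l → s ≠ [] → List.Lex (· < ·) l s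

namespace LyndonAux

open List

variable {α : Type*} [LinearOrder α]

private lemma lexTrans {a b c : List α} (h1 : List.Lex (· < ·) a b)
    (h2 : List.Lex (· < ·) b c) : List.Lex (· < ·) a c :=
  List.lt_trans h1 h2

private lemma lexIrrefl (a : List α) : ¬ List.Lex (· < ·) a a :=
  irrefl_of (List.Lex (· < ·)) a

private lemma lexTricho (a b : List α) :
    List.Lex (· < ·) a b ∨ a = b ∨ List.Lex (· < ·) b a :=
  trichotomous_of (List.Lex (· < ·)) a b

private lemma lexAsymm {a b : List α} (h : List.Lex (· < ·) a b) :
    ¬ List.Lex (· < ·) b a :=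
  asymm_of (List.Lex (· < ·)) h

/-- A word is lex-smaller than itself followed by a nonempty word. -/
private lemma lex_append_nonempty : ∀ (t : List α) {c : List α}, c ≠ [] →
    List.Lex (· < ·) t (t ++ c)
  | [], c, hc => by
    cases c with
    | nil => exact absurd rfl hc
    | cons x xs => exact List.Lex.nil
  | a :: t, c, hc => List.Lex.cons (lex_append_nonempty t hc)

/-- Key case analysis for Lex: either a proper prefix, or the comparison is
robust under appending anything to both sides. -/
private lemma lex_cases {u v : List α} (h : List.Lex (· < ·) u v) :
    (∃ t, t ≠ [] ∧ v = u ++ t) ∨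
      ∀ w w' : List α, List.Lex (· < ·) (u ++ w) (v ++ w') := by
  induction h with
  | nil => exact Or.inl ⟨_, List.cons_ne_nil _ _, rfl⟩
  | @cons a l₁ l₂ h ih =>
    rcases ih with ⟨t, ht, rfl⟩ | hall
    · exact Or.inl ⟨t, ht, rfl⟩
    · exact Or.inr fun w w' => List.Lex.cons (hall w w')
  | rel hab => exact Or.inr fun w w' => List.Lex.rel hab

private lemma suffix_append_cases {s a b : List α} (h : s <:+ a ++ b) :
    s <:+ b ∨ ∃ t, t ≠ [] ∧ t <:+ a ∧ s = t ++ b := by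
  obtain ⟨c, hc⟩ := h
  rcases List.append_eq_append_iff.mp hc with ⟨a', ha, hs⟩ | ⟨c', _, hb⟩
  · rcases eq_or_ne a' [] with rfl | hne
    · exact Or.inl (by simp [hs])
    · exact Or.inr ⟨a', hne, ⟨c, ha.symm⟩, hs⟩
  · exact Or.inl ⟨c', hb.symm⟩

/-- Existence of a minimal nonempty suffix. -/
private lemma exists_min_suffix : ∀ (w : List α), w ≠ [] →
    ∃ m, m <:+ w ∧ m ≠ [] ∧ ∀ s, s <:+ w → s ≠ [] → ¬ List.Lex (· < ·) s m
  | [], hw => absurd rfl hw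
  | a :: w, _ => by
    rcases eq_or_ne w [] with rfl | hw
    · refine ⟨[a], suffix_rfl, List.cons_ne_nil _ _, fun s hs hsne => ?_⟩
      rcases List.suffix_cons_iff.mp hs with rfl | hs'
      · exact lexIrrefl _
      · rw [List.suffix_nil.mp hs'] at hsne; exact absurd rfl hsne
    · obtain ⟨m, hm, hmne, hmin⟩ := exists_min_suffix w hw
      rcases lexTricho (a :: w) m with hlt | heq | hgt
      · refine ⟨a :: w, suffix_rfl, List.cons_ne_nil _ _, fun s hs hsne h => ?_⟩
        rcases List.suffix_cons_iff.mp hs with rfl | hs'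
        · exact lexIrrefl _ h
        · exact hmin s hs' hsne (lexTrans h hlt)
      · refine ⟨m, hm.trans (List.suffix_cons a w), hmne, fun s hs hsne h => ?_⟩
        rcases List.suffix_cons_iff.mp hs with rfl | hs'
        · rw [← heq] at h; exact lexIrrefl _ h
        · exact hmin s hs' hsne h
      · refine ⟨m, hm.trans (List.suffix_cons a w), hmne, fun s hs hsne h => ?_⟩
        rcases List.suffix_cons_iff.mp hs with rfl | hs'
        · exact lexAsymm hgt h
        · exact hmin s hs' hsne h

/-- The minimal nonempty suffix is a Lyndon word. -/
private lemma min_suffix_lyndon {w m : List α}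
    (hm : m <:+ w) (hmne : m ≠ [])
    (hmin : ∀ s, s <:+ w → s ≠ [] → ¬ List.Lex (· < ·) s m) : IsLyndon m := by
  refine ⟨hmne, fun s hs hne hne' => ?_⟩
  rcases lexTricho m s with h | h | h
  · exact h
  · exact absurd h.symm hne
  · exact absurd h (hmin s (hs.trans hm) hne')

private lemma chain'_not_lex_head_last : ∀ {v : List α} {f : List (List α)}
    (_ : List.Chain' (fun a b => ¬ List.Lex (· < ·) a b) (v :: f)) (hf : f ≠ []),
    ¬ List.Lex (· < ·) v (f.getLast hf)
  | v, [], _, hf => absurd rfl hf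
  | v, u :: f, hc, _ => by
    rcases eq_or_ne f [] with rfl | hf
    · simpa using (List.isChain_cons_cons.mp hc).1
    · have h1 : ¬ List.Lex (· < ·) v u := (List.isChain_cons_cons.mp hc).1
      have h2 := chain'_not_lex_head_last (List.isChain_cons_cons.mp hc).2 hf
      rw [List.getLast_cons hf]
      intro h
      rcases lexTricho u (f.getLast hf) with h' | h' | h'
      · exact h2 h'
      · rw [← h'] at h; exact h1 h
      · exact h1 (lexTrans h h')

/-- The last factor is a suffix of the flattening. -/
private lemma getLast_suffix_flatten {f : List (List α)} (hf : f ≠ []) :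
    f.getLast hf <:+ f.flatten :=
  ⟨(f.dropLast).flatten, by
    conv_rhs => rw [← List.dropLast_append_getLast hf]
    rw [List.flatten_append, List.flatten_cons, List.flatten_nil, List.append_nil]⟩

/-- Every nonempty suffix of a valid factorization's word is ≥ the last factor. -/
private lemma suffix_ge_last : ∀ (f : List (List α)) (hf : f ≠ [])
    (_ : ∀ x ∈ f, IsLyndon x)
    (_ : List.Chain' (fun a b => ¬ List.Lex (· < ·) a b) f)
    (s : List α), s <:+ f.flatten → s ≠ [] →
    ¬ List.Lex (· < ·) s (f.getLast hf)
  | [], hf, _, _, _, _, _ => absurd rfl hf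
  | [u], _, hly, _, s, hs, hsne => by
    simp only [List.flatten_cons, List.flatten_nil, List.append_nil] at hs
    simp only [List.getLast_singleton]
    rcases eq_or_ne s u with rfl | hne
    · exact lexIrrefl _
    · exact lexAsymm ((hly u (by simp)).2 s hs hne hsne)
  | v :: u :: f, _, hly, hc, s, hs, hsne => by
    have hne : u :: f ≠ [] := List.cons_ne_nil _ _
    rw [List.getLast_cons hne]
    simp only [List.flatten_cons] at hs
    have htail : ∀ x ∈ u :: f, IsLyndon x := fun x hx => hly x (List.mem_cons_of_mem _ hx)
    have hctail : List.Chain' (fun a b => ¬ List.Lex (· < ·) a b) (u :: f) :=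
      (List.isChain_cons_cons.mp hc).2
    rcases suffix_append_cases hs with hs' | ⟨t, htne, htv, rfl⟩
    · exact suffix_ge_last (u :: f) hne htail hctail s (by simpa using hs') hsne
    · set L := (u :: f).getLast hne with hL
      have hLly : IsLyndon L := htail _ (List.getLast_mem hne)
      have hLne : L ≠ [] := hLly.1
      have hcne : (u :: f).flatten ≠ [] := by
        intro h
        exact hLne (List.suffix_nil.mp (h ▸ getLast_suffix_flatten hne))
      have hvL : ¬ List.Lex (· < ·) v L := chain'_not_lex_head_last hc hne
      have htL : ¬ List.Lex (· < ·) t L := by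
        rcases eq_or_ne t v with rfl | htv'
        · exact hvL
        · intro h
          exact hvL (lexTrans ((hly v (by simp)).2 t htv htv' htne) h)
      intro h
      exact htL (lexTrans (lex_append_nonempty t hcne) h)

/-- Validity predicate. -/
def Valid (f : List (List α)) (w : List α) : Prop :=
  (∀ x ∈ f, IsLyndon x) ∧
  List.Chain' (fun a b => ¬ List.Lex (· < ·) a b) f ∧
  f.flatten = w

private lemma valid_ne_nil {f : List (List α)} {w : List α} (hv : Valid f w)
    (hw : w ≠ []) : f ≠ [] := by
  rintro rfl
  exact hw (hv.2.2.symm)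

/-- The last factor of any valid factorization is minimal among nonempty suffixes. -/
private lemma valid_last_min {f : List (List α)} {w : List α} (hv : Valid f w)
    (hw : w ≠ []) :
    f.getLast (valid_ne_nil hv hw) <:+ w ∧ f.getLast (valid_ne_nil hv hw) ≠ [] ∧
    ∀ s, s <:+ w → s ≠ [] → ¬ List.Lex (· < ·) s (f.getLast (valid_ne_nil hv hw)) := by
  obtain ⟨hly, hc, hfl⟩ := hv
  have hf := valid_ne_nil ⟨hly, hc, hfl⟩ hw
  refine ⟨hfl ▸ getLast_suffix_flatten hf, (hly _ (List.getLast_mem hf)).1,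
    fun s hs hsne => suffix_ge_last f hf hly hc s (hfl ▸ hs) hsne⟩

/-- Existence. -/
private lemma exists_valid : ∀ (n : ℕ) (w : List α), w.length ≤ n → w ≠ [] →
    ∃ f : List (List α), Valid f w
  | 0, w, hl, hw => absurd (List.eq_nil_of_length_eq_zero (Nat.le_zero.mp hl)) hw
  | n + 1, w, hl, hw => by
    obtain ⟨m, hm, hmne, hmin⟩ := exists_min_suffix w hw
    have hmly : IsLyndon m := min_suffix_lyndon hm hmne hmin
    obtain ⟨p, hp⟩ := hm
    rcases eq_or_ne p [] with rfl | hpne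
    · exact ⟨[m], by simpa using hmly, List.isChain_singleton m, by simpa using hp⟩
    · have hplen : p.length ≤ n := by
        have h1 : p.length + m.length ≤ n + 1 := by
          rw [← List.length_append, hp]; exact hl
        have h2 : m.length ≠ 0 := fun h => hmne (List.length_eq_zero_iff.mp h)
        omega
      obtain ⟨f', hly', hc', hfl'⟩ := exists_valid n p hplen hpne
      have hf'ne : f' ≠ [] := by rintro rfl; exact hpne hfl'.symm
      set m' := f'.getLast hf'ne with hm'def
      have hm'ly : IsLyndon m' := hly' _ (List.getLast_mem hf'ne)
      have hm'p : m' <:+ p := hfl' ▸ getLast_suffix_flatten hf'ne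
      have hsfx : m' ++ m <:+ w := by
        obtain ⟨q, hq⟩ := hm'p
        exact ⟨q, by rw [← hp, ← hq]; simp [List.append_assoc]⟩
      have hkey : ¬ List.Lex (· < ·) m' m := by
        intro h
        rcases lex_cases h with ⟨x, hxne, hx⟩ | hall
        · -- m = m' ++ x
          have hxm : x ≠ m := by
            intro h'
            have hlen := congrArg List.length hx
            rw [h', List.length_append] at hlen
            have : m'.length = 0 := by omega
            exact hm'ly.1 (List.length_eq_zero_iff.mp this)
          have hmx : List.Lex (· < ·) m x :=
            hmly.2 x ⟨m', hx.symm⟩ hxm hxne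
          refine hmin (m' ++ m) hsfx (by simp [hmly.1]) ?_
          conv_rhs => rw [hx]
          exact List.Lex.append_left _ (by rw [hx] at hmx ⊢; exact hmx) m'
        · have := hall m []
          rw [List.append_nil] at this
          exact hmin (m' ++ m) hsfx (by simp [hmly.1]) this
      refine ⟨f' ++ [m], ?_, ?_, ?_⟩
      · intro x hx
        rcases List.mem_append.mp hx with h | h
        · exact hly' x h
        · rw [List.mem_singleton.mp h]; exact hmly
      · refine List.isChain_append.mpr ⟨hc', List.isChain_singleton m, ?_⟩
        intro x hx y hy
        rw [List.getLast?_eq_getLast hf'ne, Option.mem_some_iff] at hx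
        simp only [List.head?_cons, Option.mem_some_iff] at hy
        rw [← hx, ← hy]
        exact hkey
      · rw [List.flatten_append, hfl', List.flatten_cons, List.flatten_nil,
          List.append_nil, hp]

/-- Uniqueness. -/
private lemma unique_valid : ∀ (n : ℕ) (w : List α), w.length ≤ n → w ≠ [] →
    ∀ f g : List (List α), Valid f w → Valid g w → f = g
  | 0, w, hl, hw, _, _, _, _ =>
      absurd (List.eq_nil_of_length_eq_zero (Nat.le_zero.mp hl)) hw
  | n + 1, w, hl, hw, f, g, hvf, hvg => by
    have hf := valid_ne_nil hvf hw
    have hg := valid_ne_nil hvg hw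
    obtain ⟨hfs, hfne, hfmin⟩ := valid_last_min hvf hw
    obtain ⟨hgs, hgne, hgmin⟩ := valid_last_min hvg hw
    have hlast : f.getLast hf = g.getLast hg := by
      rcases lexTricho (f.getLast hf) (g.getLast hg) with h | h | h
      · exact absurd h (hgmin _ hfs hfne)
      · exact h
      · exact absurd h (hfmin _ hgs hgne)
    set u := f.getLast hf with hu
    have hfeq : f.dropLast ++ [u] = f := List.dropLast_append_getLast hf
    have hgeq : g.dropLast ++ [u] = g := hlast ▸ List.dropLast_append_getLast hg
    have hflat : f.dropLast.flatten ++ u = w := by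
      have h := hvf.2.2
      conv_lhs at h => rw [← hfeq]
      rwa [List.flatten_append, List.flatten_cons, List.flatten_nil,
        List.append_nil] at h
    have hglat : g.dropLast.flatten ++ u = w := by
      have h := hvg.2.2
      conv_lhs at h => rw [← hgeq]
      rwa [List.flatten_append, List.flatten_cons, List.flatten_nil,
        List.append_nil] at h
    have hpeq : f.dropLast.flatten = g.dropLast.flatten :=
      List.append_cancel_right (by rw [hflat, hglat])
    rcases eq_or_ne f.dropLast.flatten [] with hpnil | hpne
    · have hfd : f.dropLast = [] := by
        rcases hfd : f.dropLast with _ | ⟨a, l⟩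
        · rfl
        · rw [hfd] at hpnil
          have ha : a = [] := List.flatten_eq_nil_iff.mp hpnil a (by simp)
          exact absurd ha (hvf.1 a (List.mem_of_mem_dropLast (by rw [hfd]; simp))).1
      have hgd : g.dropLast = [] := by
        have hgnil : g.dropLast.flatten = [] := by rw [← hpeq]; exact hpnil
        rcases hgd : g.dropLast with _ | ⟨a, l⟩
        · rfl
        · rw [hgd] at hgnil
          have ha : a = [] := List.flatten_eq_nil_iff.mp hgnil a (by simp)
          exact absurd ha (hvg.1 a (List.mem_of_mem_dropLast (by rw [hgd]; simp))).1
      rw [← hfeq, ← hgeq, hfd, hgd]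
    · have hplen : f.dropLast.flatten.length ≤ n := by
        have h1 : f.dropLast.flatten.length + u.length = w.length := by
          rw [← List.length_append, hflat]
        have h2 : u.length ≠ 0 := fun h => hfne (List.length_eq_zero_iff.mp h)
        have h3 : w.length ≤ n + 1 := hl
        omega
      have hvf' : Valid f.dropLast f.dropLast.flatten := by
        refine ⟨fun x hx => hvf.1 x (List.mem_of_mem_dropLast hx), ?_, rfl⟩
        have h := hvf.2.1
        conv at h => rw [← hfeq]
        exact (List.isChain_append.mp h).1
      have hvg' : Valid g.dropLast f.dropLast.flatten := by
        refine ⟨fun x hx => hvg.1 x (List.mem_of_mem_dropLast hx), ?_, hpeq.symm⟩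
        have h := hvg.2.1
        conv at h => rw [← hgeq]
        exact (List.isChain_append.mp h).1
      have hdl := unique_valid n f.dropLast.flatten hplen hpne f.dropLast g.dropLast hvf' hvg'
      rw [← hfeq, ← hgeq, hdl]

end LyndonAux

/-- Chen–Fox–Lyndon: every nonempty word has a unique
factorization as a nonincreasing concatenation of Lyndon words. -/
theorem lyndon_factorization_exists_unique {α : Type*} [LinearOrder α]
    (w : List α) (hw : w ≠ []) :
    ∃! f : List (List α),
      (∀ x ∈ f, IsLyndon x) ∧
      List.Chain' (fun a b => ¬ List.Lex (· < ·) a b) f ∧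
      f.flatten = w := by
  obtain ⟨f, hf⟩ := LyndonAux.exists_valid w.length w le_rfl hw
  exact ⟨f, hf, fun g hg => LyndonAux.unique_valid w.length w le_rfl hw g f hg hf⟩
end
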